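/- Let A be a unital Banach algebra, X a unital Banach A-bimodule, and δ : A → X a bounded approximately local derivation. Then δ(PQ) = δ(P)·Q + P·δ(Q) for all idempotents P, Q ∈ A. -/

import Mathlib

open Filter Topology

/-- If `A` is a unital Banach algebra, `X` a unital Banach `A`-bimodule and
`δ : A → X` a bounded approximately local derivation, then
`δ (P * Q) = δ P • Q + P • δ Q` for all idempotents `P, Q ∈ A`. -/
theorem approx_local_derivation_on_idempotents
    {A : Type*} [NormedRing A] [NormedAlgebra ℂ A] [CompleteSpace A]
    {X : Type*} [NormedAddCommGroup X] [NormedSpace ℂ X] [CompleteSpace X]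
    -- Banach `A`-bimodule structure on `X`: left action `l`, right action `r`
    (l : A → X → X) (r : X → A → X)
    (l_add : ∀ a b x, l (a + b) x = l a x + l b x)
    (l_add' : ∀ a x y, l a (x + y) = l a x + l a y)
    (l_smul : ∀ (c : ℂ) a x, l (c • a) x = c • l a x)
    (l_smul' : ∀ (c : ℂ) a x, l a (c • x) = c • l a x)
    (l_mul : ∀ a b x, l (a * b) x = l a (l b x))
    (r_add : ∀ x y a, r (x + y) a = r x a + r y a)
    (r_add' : ∀ x a b, r x (a + b) = r x a + r x b)
    (r_smul : ∀ (c : ℂ) x a, r (c • x) a = c • r x a)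
    (r_smul' : ∀ (c : ℂ) x a, r x (c • a) = c • r x a)
    (r_mul : ∀ x a b, r (r x a) b = r x (a * b))
    (lr_comm : ∀ a x b, r (l a x) b = l a (r x b))
    (l_norm : ∀ a x, ‖l a x‖ ≤ ‖a‖ * ‖x‖)
    (r_norm : ∀ x a, ‖r x a‖ ≤ ‖x‖ * ‖a‖)
    -- the bimodule is unital
    (l_one : ∀ x, l 1 x = x)
    (r_one : ∀ x, r x 1 = x)
    -- `δ` is a bounded approximately local derivation
    (δ : A →L[ℂ] X)
    (hδ : ∀ a : A, δ a ∈ closure {y : X | ∃ d : A →L[ℂ] X,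
        (∀ u v : A, d (u * v) = r (d u) v + l u (d v)) ∧ y = d a}) :
    ∀ P Q : A, P * P = P → Q * Q = Q →
      δ (P * Q) = r (δ P) Q + l P (δ Q) := by
  intro P Q hP hQ
  -- derived module identities
  have l_zero : ∀ x : X, l (0 : A) x = 0 := fun x => by
    simpa using l_smul (0 : ℂ) 0 x
  have l_zero' : ∀ a : A, l a (0 : X) = 0 := fun a => by
    simpa using l_smul' (0 : ℂ) a 0
  have r_zero : ∀ a : A, r (0 : X) a = 0 := fun a => by
    simpa using r_smul (0 : ℂ) 0 a
  have r_zero' : ∀ x : X, r x (0 : A) = 0 := fun x => by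
    simpa using r_smul' (0 : ℂ) x 0
  have r_neg : ∀ (x : X) (a : A), r (-x) a = -(r x a) := fun x a => by
    simpa using r_smul (-1 : ℂ) x a
  have l_neg' : ∀ (a : A) (x : X), l a (-x) = -(l a x) := fun a x => by
    simpa using l_smul' (-1 : ℂ) a x
  have r_sub : ∀ (x y : X) (a : A), r (x - y) a = r x a - r y a := fun x y a => by
    rw [sub_eq_add_neg, r_add, r_neg, ← sub_eq_add_neg]
  have l_sub' : ∀ (a : A) (x y : X), l a (x - y) = l a x - l a y := fun a x y => by
    rw [sub_eq_add_neg, l_add', l_neg', ← sub_eq_add_neg]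
  have hPP : (1 - P) * P = 0 := by rw [sub_mul, one_mul, hP, sub_self]
  have hQQ : Q * (1 - Q) = 0 := by rw [mul_sub, mul_one, hQ, sub_self]
  -- the key one-point closure principle
  have key : ∀ a b c : A,
      (∀ d : A →L[ℂ] X, (∀ u v : A, d (u * v) = r (d u) v + l u (d v)) →
        l a (r (d c) b) = 0) →
      l a (r (δ c) b) = 0 := by
    intro a b c hall
    let F : X →ₗ[ℂ] X :=
      { toFun := fun x => l a (r x b)
        map_add' := fun x y => by rw [r_add, l_add']
        map_smul' := fun t x => by simp only [RingHom.id_apply]; rw [r_smul, l_smul'] }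
    have hFcont : Continuous F := by
      refine AddMonoidHomClass.continuous_of_bound F (‖a‖ * ‖b‖) fun x => ?_
      calc ‖l a (r x b)‖ ≤ ‖a‖ * ‖r x b‖ := l_norm _ _
        _ ≤ ‖a‖ * (‖x‖ * ‖b‖) :=
            mul_le_mul_of_nonneg_left (r_norm x b) (norm_nonneg a)
        _ = ‖a‖ * ‖b‖ * ‖x‖ := by ring
    have hclosed : IsClosed {x : X | l a (r x b) = 0} := by
      have heq : {x : X | l a (r x b) = 0} = F ⁻¹' {0} := rfl
      rw [heq]
      exact IsClosed.preimage hFcont isClosed_singleton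
    have hsub : {y : X | ∃ d : A →L[ℂ] X,
        (∀ u v : A, d (u * v) = r (d u) v + l u (d v)) ∧ y = d c}
        ⊆ {x : X | l a (r x b) = 0} := by
      rintro y ⟨d, hd, rfl⟩
      exact hall d hd
    exact closure_minimal hsub hclosed (hδ c)
  -- four corner identities, each at a single point
  have h1 : l P (r (δ (P * Q - P - Q)) Q) = 0 := by
    refine key P Q _ fun d hd => ?_
    simp only [map_sub, hd P Q, r_sub, r_add, r_mul, lr_comm, l_sub', l_add',
      ← l_mul, hP, hQ, hPP, hQQ, l_zero, l_zero', r_zero, r_zero']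
    abel
  have h2 : l P (r (δ (P * Q - Q)) (1 - Q)) = 0 := by
    refine key P (1 - Q) _ fun d hd => ?_
    simp only [map_sub, hd P Q, r_sub, r_add, r_mul, lr_comm, l_sub', l_add',
      ← l_mul, hP, hQ, hPP, hQQ, l_zero, l_zero', r_zero, r_zero']
    abel
  have h3 : l (1 - P) (r (δ (P * Q - P)) Q) = 0 := by
    refine key (1 - P) Q _ fun d hd => ?_
    simp only [map_sub, hd P Q, r_sub, r_add, r_mul, lr_comm, l_sub', l_add',
      ← l_mul, hP, hQ, hPP, hQQ, l_zero, l_zero', r_zero, r_zero']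
    abel
  have h4 : l (1 - P) (r (δ (P * Q)) (1 - Q)) = 0 := by
    refine key (1 - P) (1 - Q) _ fun d hd => ?_
    simp only [map_sub, hd P Q, r_sub, r_add, r_mul, lr_comm, l_sub', l_add',
      ← l_mul, hP, hQ, hPP, hQQ, l_zero, l_zero', r_zero, r_zero']
    abel
  -- Peirce-type decomposition of any element of `X`
  have decomp : ∀ z : X,
      z = l P (r z Q) + l P (r z (1 - Q)) + l (1 - P) (r z Q)
            + l (1 - P) (r z (1 - Q)) := by
    intro z
    have e1 : l P (r z Q) + l P (r z (1 - Q)) = l P z := by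
      rw [← l_add', ← r_add', show Q + (1 - Q) = 1 by abel, r_one]
    have e2 : l (1 - P) (r z Q) + l (1 - P) (r z (1 - Q)) = l (1 - P) z := by
      rw [← l_add', ← r_add', show Q + (1 - Q) = 1 by abel, r_one]
    calc z = l 1 z := (l_one z).symm
      _ = l (P + (1 - P)) z := by rw [show P + (1 - P) = 1 by abel]
      _ = l P z + l (1 - P) z := l_add _ _ _
      _ = _ := by rw [← e1, ← e2]; abel
  -- assemble
  rw [← sub_eq_zero]
  set T := δ (P * Q) - (r (δ P) Q + l P (δ Q)) with hTdef
  have hc1 : l P (r T Q) = 0 := by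
    rw [hTdef, ← h1]
    simp only [map_sub, r_sub, r_add, r_mul, lr_comm, l_sub', l_add',
      ← l_mul, hP, hQ, hPP, hQQ, l_zero, l_zero', r_zero, r_zero']
    abel
  have hc2 : l P (r T (1 - Q)) = 0 := by
    rw [hTdef, ← h2]
    simp only [map_sub, r_sub, r_add, r_mul, lr_comm, l_sub', l_add',
      ← l_mul, hP, hQ, hPP, hQQ, l_zero, l_zero', r_zero, r_zero']
    abel
  have hc3 : l (1 - P) (r T Q) = 0 := by
    rw [hTdef, ← h3]
    simp only [map_sub, r_sub, r_add, r_mul, lr_comm, l_sub', l_add',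
      ← l_mul, hP, hQ, hPP, hQQ, l_zero, l_zero', r_zero, r_zero']
    abel
  have hc4 : l (1 - P) (r T (1 - Q)) = 0 := by
    rw [hTdef, ← h4]
    simp only [map_sub, r_sub, r_add, r_mul, lr_comm, l_sub', l_add',
      ← l_mul, hP, hQ, hPP, hQQ, l_zero, l_zero', r_zero, r_zero']
    abel
  rw [decomp T, hc1, hc2, hc3, hc4]
  simp
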